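/- Let σ > 0 and η > 0, let X and W be independent real random variables with X ~ N(0, σ²/2) and W ~ N(0, η²/2), and set c = σ² / (√π √(σ² + η²)). Then the conditional expectation of X given the sigma-algebra generated by sign(X + W) satisfies E[X | sign(X + W)] = c · sign(X + W) almost surely. -/

import Mathlib

open MeasureTheory ProbabilityTheory Real Filter
open scoped NNReal ENNReal

section Aux

lemma measurable_realSign : Measurable Real.sign := by
  have h : Real.sign = fun r : ℝ => if r < 0 then (-1:ℝ) else if 0 < r then 1 else 0 := by
    funext r; rfl
  rw [h]
  exact Measurable.ite (measurableSet_lt measurable_id measurable_const) measurable_const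
    (Measurable.ite (measurableSet_lt measurable_const measurable_id) measurable_const
      measurable_const)

lemma abs_realSign_le_one (t : ℝ) : |Real.sign t| ≤ 1 := by
  rcases lt_trichotomy t 0 with h | h | h
  · rw [Real.sign_of_neg h]; norm_num
  · subst h; rw [Real.sign_zero]; norm_num
  · rw [Real.sign_of_pos h]; norm_num

lemma gpdf_even (v : ℝ≥0) (x : ℝ) : gaussianPDFReal 0 v (-x) = gaussianPDFReal 0 v x := by
  simp [gaussianPDFReal]

lemma integrable_gpdf_mul_id {v : ℝ≥0} (hv : v ≠ 0) :
    Integrable (fun x => gaussianPDFReal 0 v x * x) := by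
  have hv' : 0 < (v:ℝ) := by positivity
  have h := (integrable_mul_exp_neg_mul_sq (b := (2*(v:ℝ))⁻¹) (by positivity)).const_mul
    ((√(2*π*v))⁻¹)
  refine h.congr (Filter.Eventually.of_forall fun x => ?_)
  simp only [gaussianPDFReal]
  rw [sub_zero]
  ring_nf

lemma setIntegral_gaussianReal {v : ℝ≥0} (hv : v ≠ 0) {s : Set ℝ} (hs : MeasurableSet s)
    (g : ℝ → ℝ) :
    ∫ x in s, g x ∂(gaussianReal 0 v) = ∫ x in s, gaussianPDFReal 0 v x * g x := by
  rw [gaussianReal_of_var_ne_zero _ hv, gaussianPDF_def]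
  rw [show Measure.restrict (volume.withDensity fun x => ENNReal.ofReal (gaussianPDFReal 0 v x)) s
      = (volume.restrict s).withDensity fun x => ENNReal.ofReal (gaussianPDFReal 0 v x) from
    restrict_withDensity hs _]
  rw [show (fun x => ENNReal.ofReal (gaussianPDFReal 0 v x))
      = (fun x => ((Real.toNNReal (gaussianPDFReal 0 v x) : ℝ≥0) : ℝ≥0∞)) from rfl]
  rw [integral_withDensity_eq_integral_smul ((measurable_gaussianPDFReal 0 v).real_toNNReal) g]
  congr 1
  funext x
  rw [NNReal.smul_def, smul_eq_mul, Real.coe_toNNReal _ (gaussianPDFReal_nonneg _ _ _)]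

lemma integral_gaussianReal {v : ℝ≥0} (hv : v ≠ 0) (g : ℝ → ℝ) :
    ∫ x, g x ∂(gaussianReal 0 v) = ∫ x, gaussianPDFReal 0 v x * g x := by
  rw [← Measure.restrict_univ (μ := gaussianReal 0 v),
    setIntegral_gaussianReal hv MeasurableSet.univ, Measure.restrict_univ]

lemma integrable_id_gaussianReal {v : ℝ≥0} (hv : v ≠ 0) :
    Integrable (fun x : ℝ => x) (gaussianReal 0 v) := by
  rw [gaussianReal_of_var_ne_zero _ hv, gaussianPDF_def]
  rw [show (fun x => ENNReal.ofReal (gaussianPDFReal 0 v x))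
      = (fun x => ((Real.toNNReal (gaussianPDFReal 0 v x) : ℝ≥0) : ℝ≥0∞)) from rfl]
  rw [integrable_withDensity_iff_integrable_smul ((measurable_gaussianPDFReal 0 v).real_toNNReal)]
  refine (integrable_gpdf_mul_id hv).congr (Filter.Eventually.of_forall fun x => ?_)
  simp only [NNReal.smul_def, smul_eq_mul]
  rw [Real.coe_toNNReal _ (gaussianPDFReal_nonneg _ _ _)]

lemma hasDerivAt_gpdf {v : ℝ≥0} (hv : v ≠ 0) (x : ℝ) :
    HasDerivAt (fun y => -(v:ℝ) * gaussianPDFReal 0 v y) (gaussianPDFReal 0 v x * x) x := by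
  have hv' : 0 < (v:ℝ) := by positivity
  have h1 : HasDerivAt (fun y : ℝ => -(y-0)^2/(2*(v:ℝ))) (-(x/(v:ℝ))) x := by
    have := (((hasDerivAt_id x).sub_const 0).pow 2).neg.div_const (2*(v:ℝ))
    refine this.congr_deriv ?_
    field_simp
    simp
  have h2 := h1.exp
  have h3 := (h2.const_mul ((√(2*π*v))⁻¹)).const_mul (-(v:ℝ))
  refine h3.congr_deriv ?_
  simp only [gaussianPDFReal, sub_zero]
  field_simp

lemma tendsto_gpdf_atTop {v : ℝ≥0} (hv : v ≠ 0) :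
    Tendsto (fun x => -(v:ℝ) * gaussianPDFReal 0 v x) atTop (nhds 0) := by
  have hv' : 0 < (v:ℝ) := by positivity
  have h1 : Tendsto (fun x : ℝ => -(x-0)^2/(2*(v:ℝ))) atTop atBot := by
    apply Filter.Tendsto.atBot_div_const (by positivity)
    apply Filter.tendsto_neg_atBot_iff.mpr
    simpa using (tendsto_pow_atTop (two_ne_zero)).comp
      (tendsto_atTop_add_const_right atTop (0:ℝ) tendsto_id)
  have h2 : Tendsto (fun x => gaussianPDFReal 0 v x) atTop (nhds 0) := by
    have := (Real.tendsto_exp_atBot.comp h1).const_mul ((√(2*π*v))⁻¹)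
    simpa [gaussianPDFReal_def] using this
  simpa using h2.const_mul (-(v:ℝ))

lemma setIntegral_Ioi_id_gaussianReal {v : ℝ≥0} (hv : v ≠ 0) (a : ℝ) :
    ∫ x in Set.Ioi a, x ∂(gaussianReal 0 v) = (v:ℝ) * gaussianPDFReal 0 v a := by
  rw [setIntegral_gaussianReal hv measurableSet_Ioi]
  have h := integral_Ioi_of_hasDerivAt_of_tendsto'
    (a := a) (f := fun y => -(v:ℝ) * gaussianPDFReal 0 v y) (m := 0)
    (f' := fun x => gaussianPDFReal 0 v x * x)
    (fun x _ => hasDerivAt_gpdf hv x)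
    ((integrable_gpdf_mul_id hv).integrableOn)
    (tendsto_gpdf_atTop hv)
  rw [h]; ring

lemma pdf_prod_integral (σ η : ℝ) (hσ : 0 < σ) (hη : 0 < η) :
    ∫ w, gaussianPDFReal 0 ⟨η^2/2, by positivity⟩ w * gaussianPDFReal 0 ⟨σ^2/2, by positivity⟩ w
      = 1 / (√π * √(σ^2 + η^2)) := by
  have hb : (0:ℝ) < 1/σ^2 + 1/η^2 := by positivity
  have h1 : (fun w : ℝ => gaussianPDFReal 0 ⟨η^2/2, by positivity⟩ w *
      gaussianPDFReal 0 ⟨σ^2/2, by positivity⟩ w)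
      = fun w => ((√(π * η^2))⁻¹ * (√(π * σ^2))⁻¹) * rexp (-(1/σ^2 + 1/η^2) * w^2) := by
    funext w
    simp only [gaussianPDFReal, NNReal.coe_mk, sub_zero]
    show (√(2*π*(η^2/2)))⁻¹ * rexp (-w^2/(2*(η^2/2))) * ((√(2*π*(σ^2/2)))⁻¹ * rexp (-w^2/(2*(σ^2/2)))) = _
    rw [mul_mul_mul_comm, ← Real.exp_add]
    have hσ' : σ ≠ 0 := hσ.ne'
    have hη' : η ≠ 0 := hη.ne'
    congr 1
    · congr 2 <;> ring
    · congr 1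
      field_simp
      ring
  rw [h1, MeasureTheory.integral_const_mul, integral_gaussian]
  have hπ : (0:ℝ) < π := pi_pos
  have e1 : √(π * η^2) = √π * η := by
    rw [Real.sqrt_mul hπ.le, Real.sqrt_sq hη.le]
  have e2 : √(π * σ^2) = √π * σ := by
    rw [Real.sqrt_mul hπ.le, Real.sqrt_sq hσ.le]
  have e3 : π / (1/σ^2 + 1/η^2) = π * (σ*η/√(σ^2+η^2))^2 := by
    rw [div_pow, Real.sq_sqrt (by positivity)]
    field_simp
    ring
  have e4 : √(π / (1/σ^2 + 1/η^2)) = √π * (σ*η/√(σ^2+η^2)) := by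
    rw [e3, Real.sqrt_mul hπ.le, Real.sqrt_sq (by positivity)]
  rw [e1, e2, e4]
  have hsπ : (0:ℝ) < √π := Real.sqrt_pos.mpr hπ
  have hs2 : (0:ℝ) < √(σ^2+η^2) := Real.sqrt_pos.mpr (by positivity)
  have hππ : √π * √π = π := Real.mul_self_sqrt hπ.le
  field_simp

lemma gaussianReal_map_neg {v : ℝ≥0} :
    (gaussianReal 0 v).map (fun x : ℝ => -x) = gaussianReal 0 v := by
  have h := gaussianReal_map_const_mul (μ := 0) (v := v) (-1)
  rw [show ((fun x : ℝ => -1 * x)) = (fun x : ℝ => -x) from funext fun x => by ring] at h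
  rw [h]
  congr 1
  · ring
  · ext
    norm_num

end Aux

/-- The conditional mean estimator of `X ~ N(0, σ²/2)` given the σ-algebra
generated by the one-bit observation `sign(X + W)`, `W ~ N(0, η²/2)` independent of `X`, is
linear: `E[X | sign(X+W)] = c · sign(X+W)` a.s. with `c = σ²/(√π √(σ²+η²))`. -/
theorem stmt10 {Ω : Type*} [MeasureSpace Ω] [IsProbabilityMeasure (ℙ : Measure Ω)]
    (σ η : ℝ) (hσ : 0 < σ) (hη : 0 < η)
    (X W : Ω → ℝ) (hX : Measurable X) (hW : Measurable W)
    (hXd : Measure.map X ℙ = gaussianReal 0 ⟨σ ^ 2 / 2, by positivity⟩)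
    (hWd : Measure.map W ℙ = gaussianReal 0 ⟨η ^ 2 / 2, by positivity⟩)
    (hindep : IndepFun X W)
    (c : ℝ) (hc : c = σ ^ 2 / (Real.sqrt π * Real.sqrt (σ ^ 2 + η ^ 2))) :
    ℙ[X | MeasurableSpace.comap (fun ω => Real.sign (X ω + W ω)) inferInstance] =ᵐ[ℙ]
      fun ω => c * Real.sign (X ω + W ω) := by
  classical
  set vX : ℝ≥0 := ⟨σ ^ 2 / 2, by positivity⟩ with hvXdef
  set vW : ℝ≥0 := ⟨η ^ 2 / 2, by positivity⟩ with hvWdef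
  have hvX : vX ≠ 0 := by
    simp only [ne_eq, ← NNReal.coe_eq_zero, hvXdef, NNReal.coe_mk]
    exact fun h => (show (σ^2/2:ℝ) ≠ 0 by positivity) (congrArg Subtype.val h)
  have hvW : vW ≠ 0 := by
    simp only [ne_eq, ← NNReal.coe_eq_zero, hvWdef, NNReal.coe_mk]
    exact fun h => (show (η^2/2:ℝ) ≠ 0 by positivity) (congrArg Subtype.val h)
  set fs : Ω → ℝ := fun ω => Real.sign (X ω + W ω) with hfs
  have hSm : Measurable (fun ω => X ω + W ω) := hX.add hW
  have hfsm : Measurable fs := measurable_realSign.comp hSm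
  have hm : MeasurableSpace.comap fs inferInstance ≤ (inferInstance : MeasurableSpace Ω) :=
    hfsm.comap_le
  set A : Set Ω := {ω | 0 < X ω + W ω} with hA
  set B' : Set Ω := {ω | X ω + W ω < 0} with hB'
  set N : Set Ω := {ω | X ω + W ω = 0} with hN
  have hAm : MeasurableSet A := measurableSet_lt measurable_const hSm
  have hB'm : MeasurableSet B' := measurableSet_lt hSm measurable_const
  -- the pair map
  set T : Ω → ℝ × ℝ := fun ω => (W ω, X ω) with hT
  have hTm : Measurable T := hW.prodMk hX
  set ρ : Measure (ℝ × ℝ) := (gaussianReal 0 vW).prod (gaussianReal 0 vX) with hρ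
  have hmap : Measure.map T ℙ = ρ := by
    have h := (indepFun_iff_map_prod_eq_prod_map_map hW.aemeasurable hX.aemeasurable).mp
      hindep.symm
    rw [hWd, hXd] at h
    exact h
  -- integrability of X
  have hXint : Integrable X ℙ := by
    have h1 : Integrable (fun x : ℝ => x) (Measure.map X ℙ) := by
      rw [hXd]; exact integrable_id_gaussianReal hvX
    exact (integrable_map_measure aestronglyMeasurable_id hX.aemeasurable).mp h1
  -- mean zero
  have hEX : ∫ ω, X ω ∂ℙ = 0 := by
    have h1 : ∫ ω, X ω ∂ℙ = ∫ x, x ∂(gaussianReal 0 vX) := by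
      rw [← hXd]
      exact (integral_map hX.aemeasurable aestronglyMeasurable_id).symm
    have h2 : ∫ x, x ∂(gaussianReal 0 vX) = ∫ x : ℝ, -x ∂(gaussianReal 0 vX) := by
      conv_lhs => rw [← _root_.gaussianReal_map_neg (v := vX)]
      exact integral_map measurable_neg.aemeasurable aestronglyMeasurable_id
    rw [integral_neg] at h2
    rw [h1]
    linarith
  -- no atom at 0 for the sum
  have hsetN : MeasurableSet {p : ℝ × ℝ | p.2 + p.1 = 0} :=
    measurableSet_eq_fun (measurable_snd.add measurable_fst) measurable_const
  have hsetA : MeasurableSet {p : ℝ × ℝ | 0 < p.2 + p.1} :=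
    measurableSet_lt measurable_const (measurable_snd.add measurable_fst)
  have hsetB : MeasurableSet {p : ℝ × ℝ | p.2 + p.1 < 0} :=
    measurableSet_lt (measurable_snd.add measurable_fst) measurable_const
  have hPN : ℙ N = 0 := by
    have h1 : N = T ⁻¹' {p : ℝ × ℝ | p.2 + p.1 = 0} := by
      ext ω; simp [hN, hT]
    rw [h1, ← Measure.map_apply hTm hsetN, hmap, hρ, Measure.prod_apply hsetN]
    have h2 : ∀ w : ℝ, (gaussianReal 0 vX) (Prod.mk w ⁻¹' {p : ℝ × ℝ | p.2 + p.1 = 0}) = 0 := by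
      intro w
      have he : Prod.mk w ⁻¹' {p : ℝ × ℝ | p.2 + p.1 = 0} = {-w} := by
        ext x; simp [eq_neg_iff_add_eq_zero]
      rw [he]
      exact gaussianReal_absolutelyContinuous 0 hvX (volume_singleton)
    rw [lintegral_congr h2, lintegral_zero]
  have hIN : ∀ h : Ω → ℝ, ∀ s ⊆ N, ∫ ω in s, h ω ∂ℙ = 0 := fun h s hs =>
    setIntegral_measure_zero _ (measure_mono_null hs hPN)
  -- ℙ A = ℙ B'
  have hPAB : ℙ A = ℙ B' := by
    have h1 : A = T ⁻¹' {p : ℝ × ℝ | 0 < p.2 + p.1} := by ext ω; simp [hA, hT]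
    have h2 : B' = T ⁻¹' {p : ℝ × ℝ | p.2 + p.1 < 0} := by ext ω; simp [hB', hT]
    rw [h1, h2, ← Measure.map_apply hTm hsetA, ← Measure.map_apply hTm hsetB, hmap]
    have hneg : ρ.map (Prod.map (fun x : ℝ => -x) (fun x : ℝ => -x)) = ρ := by
      rw [hρ, ← Measure.map_prod_map _ _ measurable_neg measurable_neg,
        _root_.gaussianReal_map_neg, _root_.gaussianReal_map_neg]
    conv_lhs => rw [← hneg]
    rw [Measure.map_apply (measurable_neg.prodMap measurable_neg) hsetA]
    congr 1
    ext p
    show 0 < (-p.2) + (-p.1) ↔ p.2 + p.1 < 0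
    constructor <;> intro h <;> linarith
  -- ℙ Aᶜ = ℙ B'
  have hPAc : ℙ Aᶜ = ℙ B' := by
    refine le_antisymm ?_ (measure_mono fun ω hω => ?_)
    · have hsub : Aᶜ ⊆ B' ∪ N := by
        intro ω hω
        simp only [Set.mem_compl_iff, hA, Set.mem_setOf_eq, not_lt] at hω
        rcases lt_or_eq_of_le hω with h | h
        · exact Or.inl h
        · exact Or.inr h
      calc ℙ Aᶜ ≤ ℙ (B' ∪ N) := measure_mono hsub
        _ ≤ ℙ B' + ℙ N := measure_union_le _ _
        _ = ℙ B' := by rw [hPN, add_zero]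
    · simp only [hB', Set.mem_setOf_eq] at hω
      simp only [Set.mem_compl_iff, hA, Set.mem_setOf_eq, not_lt]
      exact hω.le
  have hPA : ℙ A = 1/2 := by
    have h1 : ℙ A + ℙ A = 1 := by
      have h0 := measure_add_measure_compl (μ := ℙ) hAm
      rwa [hPAc, ← hPAB, measure_univ] at h0
    have h2 : 2 * ℙ A = 1 := by rw [two_mul]; exact h1
    calc ℙ A = 2⁻¹ * (2 * ℙ A) := by
          rw [← mul_assoc, ENNReal.inv_mul_cancel two_ne_zero ENNReal.ofNat_ne_top, one_mul]
      _ = 2⁻¹ * 1 := by rw [h2]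
      _ = 1/2 := by rw [mul_one, one_div]
  have hPB' : ℙ B' = 1/2 := by rw [← hPAB]; exact hPA
  -- the key integral
  have hIA : ∫ ω in A, X ω ∂ℙ = c / 2 := by
    set F : ℝ × ℝ → ℝ := Set.indicator {p : ℝ × ℝ | 0 < p.2 + p.1} (fun p => p.2) with hF
    have hFm : Measurable F := measurable_snd.indicator hsetA
    have hid2 : Integrable (fun p : ℝ × ℝ => p.2) ρ := by
      have hsnd : Measure.map Prod.snd ρ = gaussianReal 0 vX := by
        rw [hρ, Measure.map_snd_prod, measure_univ, one_smul]
      have h1 : Integrable (fun x : ℝ => x) (Measure.map Prod.snd ρ) := by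
        rw [hsnd]; exact integrable_id_gaussianReal hvX
      exact (integrable_map_measure aestronglyMeasurable_id measurable_snd.aemeasurable).mp h1
    have hFint : Integrable F ρ := by
      refine hid2.norm.mono' hFm.aestronglyMeasurable ?_
      refine Filter.Eventually.of_forall fun p => ?_
      exact norm_indicator_le_norm_self _ p
    have step1 : ∫ ω in A, X ω ∂ℙ = ∫ p, F p ∂ρ := by
      rw [← hmap, integral_map hTm.aemeasurable hFm.aestronglyMeasurable,
        ← integral_indicator hAm]
      congr 1
    have step2 : ∫ p, F p ∂ρ
        = ∫ w, (vX:ℝ) * gaussianPDFReal 0 vX w ∂(gaussianReal 0 vW) := by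
      rw [hρ, integral_prod _ (by rwa [← hρ])]
      congr 1
      funext w
      have hinner : (fun x => F (w, x)) = Set.indicator (Set.Ioi (-w)) (fun x : ℝ => x) := by
        funext x
        by_cases h : 0 < x + w
        · rw [hF, Set.indicator_of_mem (by simpa using h),
            Set.indicator_of_mem (by simp; linarith)]
        · rw [hF, Set.indicator_of_notMem (by simpa using h),
            Set.indicator_of_notMem (by simp; linarith)]
      rw [hinner, integral_indicator measurableSet_Ioi,
        setIntegral_Ioi_id_gaussianReal hvX, gpdf_even]
    have step3 : ∫ w, (vX:ℝ) * gaussianPDFReal 0 vX w ∂(gaussianReal 0 vW)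
        = (vX:ℝ) * ∫ w, gaussianPDFReal 0 vW w * gaussianPDFReal 0 vX w := by
      rw [integral_gaussianReal hvW]
      rw [← MeasureTheory.integral_const_mul]
      congr 1
      funext w
      ring
    rw [step1, step2, step3, hvWdef, hvXdef, pdf_prod_integral σ η hσ hη, hc]
    show σ ^ 2 / 2 * _ = _
    field_simp
  -- integral over B'
  have hIB : ∫ ω in B', X ω ∂ℙ = -(c/2) := by
    have h1 := integral_add_compl hAm hXint
    have h2 := integral_inter_add_diff (s := Aᶜ) (t := B') hB'm hXint.integrableOn
    have hABc : Aᶜ ∩ B' = B' := by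
      ext ω
      simp only [Set.mem_inter_iff, Set.mem_compl_iff, hA, hB', Set.mem_setOf_eq,
        and_iff_right_iff_imp]
      intro h
      exact not_lt.mpr h.le
    have hABN : Aᶜ \ B' ⊆ N := by
      intro ω hω
      simp only [Set.mem_diff, Set.mem_compl_iff, hA, hB', Set.mem_setOf_eq, not_lt] at hω
      exact le_antisymm hω.1 hω.2
    rw [hABc, hIN X _ hABN, add_zero] at h2
    rw [← h2, hIA, hEX] at h1
    linarith
  -- the function g
  have hgm : Measurable (fun ω => c * fs ω) := hfsm.const_mul c
  have hgint : Integrable (fun ω => c * fs ω) ℙ := by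
    refine (integrable_const |c|).mono' hgm.aestronglyMeasurable ?_
    refine Filter.Eventually.of_forall fun ω => ?_
    rw [norm_mul, Real.norm_eq_abs, Real.norm_eq_abs]
    calc |c| * |fs ω| ≤ |c| * 1 := by
          exact mul_le_mul_of_nonneg_left (abs_realSign_le_one _) (abs_nonneg c)
      _ = |c| := mul_one _
  have hgA : ∫ ω in A, c * fs ω ∂ℙ = c / 2 := by
    rw [setIntegral_congr_fun hAm (g := fun _ => c)
      (fun ω hω => by rw [hfs]; simp only; rw [Real.sign_of_pos hω, mul_one]),
      setIntegral_const, measureReal_def, hPA]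
    simp [ENNReal.toReal_div]
    ring
  have hgB : ∫ ω in B', c * fs ω ∂ℙ = -(c / 2) := by
    rw [setIntegral_congr_fun hB'm (g := fun _ => -c)
      (fun ω hω => by rw [hfs]; simp only; rw [Real.sign_of_neg hω]; ring),
      setIntegral_const, measureReal_def, hPB']
    simp [ENNReal.toReal_div]
    ring
  -- decomposition of set integrals over m-measurable sets
  have hdec : ∀ (h : Ω → ℝ), Integrable h ℙ → ∀ B : Set ℝ, MeasurableSet B →
      ∫ ω in fs ⁻¹' B, h ω ∂ℙ
        = (if (1:ℝ) ∈ B then ∫ ω in A, h ω ∂ℙ else 0)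
          + (if (-1:ℝ) ∈ B then ∫ ω in B', h ω ∂ℙ else 0) := by
    intro h hint B hB
    have hsA : fs ⁻¹' B ∩ A = if (1:ℝ) ∈ B then A else ∅ := by
      split_ifs with h1
      · ext ω
        simp only [Set.mem_inter_iff, Set.mem_preimage, hA, Set.mem_setOf_eq]
        refine ⟨fun hω => hω.2, fun hω => ⟨?_, hω⟩⟩
        refine Set.mem_preimage.mpr ?_
        have hval : fs ω = 1 := Real.sign_of_pos hω
        rw [hval]
        exact h1
      · ext ω
        simp only [Set.mem_inter_iff, Set.mem_preimage, hA, Set.mem_setOf_eq,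
          Set.mem_empty_iff_false, iff_false, not_and]
        intro hmem hpos
        apply h1
        have hmem' : fs ω ∈ B := hmem
        have hval : fs ω = 1 := Real.sign_of_pos hpos
        rwa [hval] at hmem'
    have hsB : (fs ⁻¹' B \ A) ∩ B' = if (-1:ℝ) ∈ B then B' else ∅ := by
      split_ifs with h1
      · ext ω
        simp only [Set.mem_inter_iff, Set.mem_diff, Set.mem_preimage, hA, hB',
          Set.mem_setOf_eq, not_lt]
        constructor
        · exact fun hω => hω.2
        · intro hω
          refine ⟨⟨Set.mem_preimage.mpr ?_, hω.le⟩, hω⟩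
          have hval : fs ω = -1 := Real.sign_of_neg hω
          rw [hval]
          exact h1
      · ext ω
        simp only [Set.mem_empty_iff_false, iff_false]
        rintro ⟨⟨hmem, -⟩, hneg⟩
        apply h1
        have hmem' : fs ω ∈ B := hmem
        have hval : fs ω = -1 := Real.sign_of_neg hneg
        rwa [hval] at hmem'
    have hsN : (fs ⁻¹' B \ A) \ B' ⊆ N := by
      intro ω hω
      simp only [Set.mem_diff, Set.mem_preimage, hA, hB', Set.mem_setOf_eq, not_lt] at hω
      exact le_antisymm hω.1.2 hω.2
    have h2 := integral_inter_add_diff (s := fs ⁻¹' B) (t := A) hAm hint.integrableOn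
    have h3 := integral_inter_add_diff (s := fs ⁻¹' B \ A) (t := B') hB'm hint.integrableOn
    rw [hsB, hIN h _ hsN, add_zero] at h3
    rw [← h2, ← h3, hsA]
    split_ifs <;> simp
  -- conclusion
  haveI : IsFiniteMeasure ((ℙ : Measure Ω).trim hm) := isFiniteMeasure_trim hm
  haveI : SigmaFinite ((ℙ : Measure Ω).trim hm) := inferInstance
  refine Filter.EventuallyEq.symm
    (ae_eq_condExp_of_forall_setIntegral_eq hm hXint ?_ ?_ ?_)
  · intro s _ _
    exact hgint.integrableOn
  · intro s hs _
    obtain ⟨B, hB, rfl⟩ := hs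
    rw [hdec _ hgint B hB, hdec _ hXint B hB, hIA, hIB, hgA, hgB]
  · refine StronglyMeasurable.aestronglyMeasurable ?_
    refine Measurable.stronglyMeasurable ?_
    exact Measurable.const_mul (Measurable.of_comap_le le_rfl) c
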